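/- There do not exist nonconstant rational functions φ_z, φ_u ∈ ℚ(t) such that φ_u(t)² = (1 + 4φ_z(t)) · φ_z(t) · (φ_z(t) − 4) identically; i.e., the curve u² = (1+4z)·z·(z−4) admits no nonconstant rational parametrization. -/

import Mathlib

open Polynomial

section Descent

variable {K : Type*} [Field K] [IsAlgClosed K] [CharZero K]

set_option linter.unusedSectionVars false

/-- If a product of coprime polynomials is a square, each factor is a square
(over an algebraically closed field). -/
lemma sq_of_coprime_mul_sq {A B v : K[X]} (h : IsCoprime A B) (hv : A * B = v ^ 2) :
    ∃ w : K[X], A = w ^ 2 := by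
  classical
  have hg : IsUnit (gcd A B) := h.isUnit_of_dvd' (gcd_dvd_left A B) (gcd_dvd_right A B)
  obtain ⟨d, u, hd⟩ := exists_associated_pow_of_mul_eq_pow hg hv
  obtain ⟨c, -, hc⟩ := Polynomial.isUnit_iff.mp u.isUnit
  obtain ⟨γ, hγ⟩ := IsAlgClosed.exists_pow_nat_eq c (n := 2) (by norm_num)
  refine ⟨C γ * d, ?_⟩
  rw [← hd, ← hc, ← hγ]
  rw [map_pow]
  ring

/-- Linear combinations with nonzero determinant of coprime polynomials are coprime. -/
lemma coprime_comb {s t : K[X]} (h : IsCoprime s t) {a b c d : K}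
    (hdet : a * d - c * b ≠ 0) : IsCoprime (C a * s + C b * t) (C c * s + C d * t) := by
  obtain ⟨x, y, hxy⟩ := h
  have key : (C d * x - C c * y) * (C a * s + C b * t)
      + (C a * y - C b * x) * (C c * s + C d * t) = C (a * d - c * b) := by
    have : C (a * d - c * b) = (C a * C d - C c * C b) * (x * s + y * t) := by
      rw [hxy, mul_one, ← C_mul, ← C_mul, ← C_sub]
    rw [this]; ring
  have hone : C (a * d - c * b)⁻¹ * C (a * d - c * b) = 1 := by
    rw [← C_mul, inv_mul_cancel₀ hdet, C_1]
  exact ⟨C (a * d - c * b)⁻¹ * (C d * x - C c * y),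
    C (a * d - c * b)⁻¹ * (C a * y - C b * x), by linear_combination C (a*d-c*b)⁻¹ * key + hone⟩

/-- Degrees of a pair of independent linear combinations recover the max degree. -/
lemma pairmax {s t : K[X]} (hco : IsCoprime s t) {a b c d : K}
    (hdet : a * d - c * b ≠ 0) :
    max (C a * s + C b * t).natDegree (C c * s + C d * t).natDegree
      = max s.natDegree t.natDegree := by
  set L₁ := C a * s + C b * t with hL₁def
  set L₂ := C c * s + C d * t with hL₂def
  have hub : ∀ (x y : K) (u v : K[X]), (C x * u + C y * v).natDegree ≤ max u.natDegree v.natDegree := by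
    intro x y u v
    refine (natDegree_add_le _ _).trans ?_
    exact max_le_max ((natDegree_C_mul_le _ _)) ((natDegree_C_mul_le _ _))
  apply le_antisymm
  · exact max_le (hub _ _ _ _) (hub _ _ _ _)
  · have hs : s = C (d / (a*d-c*b)) * L₁ + C (-b / (a*d-c*b)) * L₂ := by
      have h1 : (d / (a*d-c*b)) * a + (-b / (a*d-c*b)) * c = 1 := by
        rw [div_mul_eq_mul_div, div_mul_eq_mul_div, ← add_div, div_eq_iff hdet]; ring
      have h0 : (d / (a*d-c*b)) * b + (-b / (a*d-c*b)) * d = 0 := by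
        field_simp <;> ring
      have hrw : C (d / (a*d-c*b)) * L₁ + C (-b / (a*d-c*b)) * L₂
          = C ((d / (a*d-c*b)) * a + (-b / (a*d-c*b)) * c) * s
            + C ((d / (a*d-c*b)) * b + (-b / (a*d-c*b)) * d) * t := by
        simp only [hL₁def, hL₂def, C_add, C_mul]; ring
      rw [hrw, h1, h0, C_1, C_0, one_mul, zero_mul, add_zero]
    have ht : t = C (-c / (a*d-c*b)) * L₁ + C (a / (a*d-c*b)) * L₂ := by
      have h1 : (-c / (a*d-c*b)) * b + (a / (a*d-c*b)) * d = 1 := by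
        field_simp <;> ring
      have h0 : (-c / (a*d-c*b)) * a + (a / (a*d-c*b)) * c = 0 := by
        field_simp <;> ring
      have hrw : C (-c / (a*d-c*b)) * L₁ + C (a / (a*d-c*b)) * L₂
          = C ((-c / (a*d-c*b)) * a + (a / (a*d-c*b)) * c) * s
            + C ((-c / (a*d-c*b)) * b + (a / (a*d-c*b)) * d) * t := by
        simp only [hL₁def, hL₂def, C_add, C_mul]; ring
      rw [hrw, h1, h0, C_1, C_0, one_mul, zero_mul, zero_add]
    have hsd : s.natDegree ≤ max L₁.natDegree L₂.natDegree := by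
      conv_lhs => rw [hs]
      exact hub _ _ _ _
    have htd : t.natDegree ≤ max L₁.natDegree L₂.natDegree := by
      conv_lhs => rw [ht]
      exact hub _ _ _ _
    exact max_le hsd htd

/-- The descent step. -/
lemma descend {s t v : K[X]} {a₁ b₁ a₂ b₂ a₃ b₃ a₄ b₄ : K}
    (d12 : a₁*b₂ - a₂*b₁ ≠ 0) (d13 : a₁*b₃ - a₃*b₁ ≠ 0) (d14 : a₁*b₄ - a₄*b₁ ≠ 0)
    (d23 : a₂*b₃ - a₃*b₂ ≠ 0) (d24 : a₂*b₄ - a₄*b₂ ≠ 0) (d34 : a₃*b₄ - a₄*b₃ ≠ 0)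
    (hco : IsCoprime s t)
    (heq : v^2 = (C a₁*s + C b₁*t) * (C a₂*s + C b₂*t) * ((C a₃*s + C b₃*t) * (C a₄*s + C b₄*t)))
    (hd1 : (C a₁*s + C b₁*t).natDegree = max s.natDegree t.natDegree)
    (hd2 : (C a₂*s + C b₂*t).natDegree = max s.natDegree t.natDegree) :
    ∃ (S T V : K[X]) (c₁ e₁ c₂ e₂ c₃ e₃ c₄ e₄ : K),
      (c₁*e₂ - c₂*e₁ ≠ 0) ∧ (c₁*e₃ - c₃*e₁ ≠ 0) ∧ (c₁*e₄ - c₄*e₁ ≠ 0) ∧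
      (c₂*e₃ - c₃*e₂ ≠ 0) ∧ (c₂*e₄ - c₄*e₂ ≠ 0) ∧ (c₃*e₄ - c₄*e₃ ≠ 0) ∧
      IsCoprime S T ∧
      V^2 = (C c₁*S + C e₁*T) * (C c₂*S + C e₂*T) * ((C c₃*S + C e₃*T) * (C c₄*S + C e₄*T)) ∧
      2 * max S.natDegree T.natDegree = max s.natDegree t.natDegree := by
  set L₁ := C a₁*s + C b₁*t with hL₁def
  set L₂ := C a₂*s + C b₂*t with hL₂def
  set L₃ := C a₃*s + C b₃*t with hL₃def
  set L₄ := C a₄*s + C b₄*t with hL₄def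
  have h12 : IsCoprime L₁ L₂ := coprime_comb hco d12
  have h13 : IsCoprime L₁ L₃ := coprime_comb hco d13
  have h14 : IsCoprime L₁ L₄ := coprime_comb hco d14
  have h23 : IsCoprime L₂ L₃ := coprime_comb hco d23
  have h24 : IsCoprime L₂ L₄ := coprime_comb hco d24
  have h34 : IsCoprime L₃ L₄ := coprime_comb hco d34
  obtain ⟨w₁, hw₁⟩ := sq_of_coprime_mul_sq (h12.mul_right (h13.mul_right h14))
    (show L₁ * (L₂ * (L₃ * L₄)) = v ^ 2 by linear_combination -heq)
  obtain ⟨w₂, hw₂⟩ := sq_of_coprime_mul_sq ((h12.symm).mul_right (h23.mul_right h24))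
    (show L₂ * (L₁ * (L₃ * L₄)) = v ^ 2 by linear_combination -heq)
  obtain ⟨w₃, hw₃⟩ := sq_of_coprime_mul_sq ((h13.symm).mul_right ((h23.symm).mul_right h34))
    (show L₃ * (L₁ * (L₂ * L₄)) = v ^ 2 by linear_combination -heq)
  obtain ⟨w₄, hw₄⟩ := sq_of_coprime_mul_sq ((h14.symm).mul_right ((h24.symm).mul_right (h34.symm)))
    (show L₄ * (L₁ * (L₂ * L₃)) = v ^ 2 by linear_combination -heq)
  -- scalars
  set Δ := a₁*b₂ - a₂*b₁ with hΔ
  set e₁ := (a₃*b₂ - a₂*b₃)/Δ with he₁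
  set f₁ := (a₁*b₃ - a₃*b₁)/Δ with hf₁
  set e₂ := (a₄*b₂ - a₂*b₄)/Δ with he₂
  set f₂ := (a₁*b₄ - a₄*b₁)/Δ with hf₂
  have he₁0 : e₁ ≠ 0 := by
    rw [he₁]
    apply div_ne_zero _ d12
    intro h; exact d23 (by linear_combination -h)
  have hf₁0 : f₁ ≠ 0 := div_ne_zero d13 d12
  have he₂0 : e₂ ≠ 0 := by
    rw [he₂]
    apply div_ne_zero _ d12
    intro h; exact d24 (by linear_combination -h)
  have hf₂0 : f₂ ≠ 0 := div_ne_zero d14 d12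
  have hP : e₁ * f₂ - e₂ * f₁ = (a₃*b₄ - a₄*b₃)/Δ := by
    rw [he₁, hf₂, he₂, hf₁, hΔ]
    rw [div_mul_div_comm, div_mul_div_comm, div_sub_div_same, div_eq_div_iff (mul_ne_zero d12 d12) d12]; ring
  have hL3 : L₃ = C e₁ * L₁ + C f₁ * L₂ := by
    have ha : e₁ * a₁ + f₁ * a₂ = a₃ := by
      rw [he₁, hf₁, hΔ]; rw [div_mul_eq_mul_div, div_mul_eq_mul_div, ← add_div, div_eq_iff d12]; ring
    have hb : e₁ * b₁ + f₁ * b₂ = b₃ := by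
      rw [he₁, hf₁, hΔ]; rw [div_mul_eq_mul_div, div_mul_eq_mul_div, ← add_div, div_eq_iff d12]; ring
    have hrw : C e₁ * L₁ + C f₁ * L₂ = C (e₁ * a₁ + f₁ * a₂) * s + C (e₁ * b₁ + f₁ * b₂) * t := by
      simp only [hL₁def, hL₂def, C_add, C_mul]; ring
    rw [hrw, ha, hb, hL₃def]
  have hL4 : L₄ = C e₂ * L₁ + C f₂ * L₂ := by
    have ha : e₂ * a₁ + f₂ * a₂ = a₄ := by
      rw [he₂, hf₂, hΔ]; rw [div_mul_eq_mul_div, div_mul_eq_mul_div, ← add_div, div_eq_iff d12]; ring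
    have hb : e₂ * b₁ + f₂ * b₂ = b₄ := by
      rw [he₂, hf₂, hΔ]; rw [div_mul_eq_mul_div, div_mul_eq_mul_div, ← add_div, div_eq_iff d12]; ring
    have hrw : C e₂ * L₁ + C f₂ * L₂ = C (e₂ * a₁ + f₂ * a₂) * s + C (e₂ * b₁ + f₂ * b₂) * t := by
      simp only [hL₁def, hL₂def, C_add, C_mul]; ring
    rw [hrw, ha, hb, hL₄def]
  -- square roots of the scalars
  obtain ⟨α₁, hα₁⟩ := IsAlgClosed.exists_pow_nat_eq e₁ (n := 2) (by norm_num)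
  obtain ⟨β₁, hβ₁⟩ := IsAlgClosed.exists_pow_nat_eq (-f₁) (n := 2) (by norm_num)
  obtain ⟨α₂, hα₂⟩ := IsAlgClosed.exists_pow_nat_eq e₂ (n := 2) (by norm_num)
  obtain ⟨β₂, hβ₂⟩ := IsAlgClosed.exists_pow_nat_eq (-f₂) (n := 2) (by norm_num)
  have hα₁0 : α₁ ≠ 0 := fun h => he₁0 (by linear_combination -hα₁ + α₁*h)
  have hβ₁0 : β₁ ≠ 0 := fun h => hf₁0 (by linear_combination hβ₁ - β₁*h)
  have hα₂0 : α₂ ≠ 0 := fun h => he₂0 (by linear_combination -hα₂ + α₂*h)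
  have hβ₂0 : β₂ ≠ 0 := fun h => hf₂0 (by linear_combination hβ₂ - β₂*h)
  -- the two "cross" determinants
  have hcross : (α₁*β₂ - α₂*β₁) * (α₁*β₂ + α₂*β₁) ≠ 0 := by
    have hval : (α₁*β₂ - α₂*β₁) * (α₁*β₂ + α₂*β₁) = -(e₁ * f₂ - e₂ * f₁) := by
      linear_combination (β₂^2) * hα₁ - (β₁^2) * hα₂ - e₂ * hβ₁ + e₁ * hβ₂
    rw [hval, hP]
    exact neg_ne_zero.mpr (div_ne_zero d34 d12)
  have hc13 : α₁*β₂ - α₂*β₁ ≠ 0 := fun h => hcross (by rw [h, zero_mul])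
  have hc14 : α₁*β₂ + α₂*β₁ ≠ 0 := fun h => hcross (by rw [h, mul_zero])
  -- assemble
  refine ⟨w₁, w₂, w₃ * w₄, α₁, β₁, α₁, -β₁, α₂, β₂, α₂, -β₂, ?_, ?_, ?_, ?_, ?_, ?_, ?_, ?_, ?_⟩
  · intro h
    have h' : α₁ * β₁ = 0 := by linear_combination (-1/2 : K) * h
    rcases mul_eq_zero.mp h' with h'' | h''
    exacts [hα₁0 h'', hβ₁0 h'']
  · exact hc13
  · intro h; exact hc14 (by linear_combination -h)
  · intro h; exact hc14 (by linear_combination h)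
  · intro h; exact hc13 (by linear_combination -h)
  · intro h
    have h' : α₂ * β₂ = 0 := by linear_combination (-1/2 : K) * h
    rcases mul_eq_zero.mp h' with h'' | h''
    exacts [hα₂0 h'', hβ₂0 h'']
  · have hcp := h12
    rw [hw₁, hw₂] at hcp
    exact ((IsCoprime.pow_left_iff (by norm_num)).mp
      ((IsCoprime.pow_right_iff (by norm_num)).mp hcp))
  · -- the new equation
    have h3 : w₃^2 = C e₁ * w₁^2 + C f₁ * w₂^2 := by rw [← hw₁, ← hw₂, ← hw₃]; exact hL3
    have h4 : w₄^2 = C e₂ * w₁^2 + C f₂ * w₂^2 := by rw [← hw₁, ← hw₂, ← hw₄]; exact hL4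
    have hce₁ : C e₁ = (C α₁)^2 := by rw [← C_pow, hα₁]
    have hcf₁ : C f₁ = -(C β₁)^2 := by rw [← C_pow, hβ₁]; simp
    have hce₂ : C e₂ = (C α₂)^2 := by rw [← C_pow, hα₂]
    have hcf₂ : C f₂ = -(C β₂)^2 := by rw [← C_pow, hβ₂]; simp
    rw [hce₁, hcf₁] at h3
    rw [hce₂, hcf₂] at h4
    simp only [map_neg]
    linear_combination w₄^2 * h3 + ((C α₁)^2 * w₁^2 - (C β₁)^2 * w₂^2) * h4
  · -- degrees
    have hdeg1 : 2 * w₁.natDegree = max s.natDegree t.natDegree := by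
      rw [← hd1, hw₁, natDegree_pow]
    have hdeg2 : 2 * w₂.natDegree = max s.natDegree t.natDegree := by
      rw [← hd2, hw₂, natDegree_pow]
    omega

/-- Main descent theorem: a square cannot be a product of four independent linear
forms in nonconstant coprime polynomials. -/
lemma no_four_square : ∀ n : ℕ, ∀ (s t v : K[X]) (a₁ b₁ a₂ b₂ a₃ b₃ a₄ b₄ : K),
    (a₁*b₂ - a₂*b₁ ≠ 0) → (a₁*b₃ - a₃*b₁ ≠ 0) → (a₁*b₄ - a₄*b₁ ≠ 0) →
    (a₂*b₃ - a₃*b₂ ≠ 0) → (a₂*b₄ - a₄*b₂ ≠ 0) → (a₃*b₄ - a₄*b₃ ≠ 0) →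
    IsCoprime s t → max s.natDegree t.natDegree ≤ n →
    v^2 = (C a₁*s + C b₁*t) * (C a₂*s + C b₂*t) * ((C a₃*s + C b₃*t) * (C a₄*s + C b₄*t)) →
    s.natDegree = 0 ∧ t.natDegree = 0 := by
  intro n
  induction n using Nat.strong_induction_on with
  | _ n IH =>
  intro s t v a₁ b₁ a₂ b₂ a₃ b₃ a₄ b₄ d12 d13 d14 d23 d24 d34 hco hn heq
  by_cases hN : max s.natDegree t.natDegree = 0
  · constructor <;> omega
  exfalso
  have hm12 := pairmax hco d12
  have hm13 := pairmax hco d13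
  have hm14 := pairmax hco d14
  have hm23 := pairmax hco d23
  have hm24 := pairmax hco d24
  have hm34 := pairmax hco d34
  have hfull : ((C a₁*s + C b₁*t).natDegree = max s.natDegree t.natDegree ∧
      (C a₂*s + C b₂*t).natDegree = max s.natDegree t.natDegree) ∨
      ((C a₃*s + C b₃*t).natDegree = max s.natDegree t.natDegree ∧
      (C a₄*s + C b₄*t).natDegree = max s.natDegree t.natDegree) := by
    omega
  have key : ∃ (S T V : K[X]) (c₁ e₁ c₂ e₂ c₃ e₃ c₄ e₄ : K),
      (c₁*e₂ - c₂*e₁ ≠ 0) ∧ (c₁*e₃ - c₃*e₁ ≠ 0) ∧ (c₁*e₄ - c₄*e₁ ≠ 0) ∧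
      (c₂*e₃ - c₃*e₂ ≠ 0) ∧ (c₂*e₄ - c₄*e₂ ≠ 0) ∧ (c₃*e₄ - c₄*e₃ ≠ 0) ∧
      IsCoprime S T ∧
      V^2 = (C c₁*S + C e₁*T) * (C c₂*S + C e₂*T) * ((C c₃*S + C e₃*T) * (C c₄*S + C e₄*T)) ∧
      2 * max S.natDegree T.natDegree = max s.natDegree t.natDegree := by
    rcases hfull with ⟨h1, h2⟩ | ⟨h3, h4⟩
    · exact descend d12 d13 d14 d23 d24 d34 hco heq h1 h2
    · have e31 : a₃*b₁ - a₁*b₃ ≠ 0 := fun h => d13 (by linear_combination -h)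
      have e32 : a₃*b₂ - a₂*b₃ ≠ 0 := fun h => d23 (by linear_combination -h)
      have e41 : a₄*b₁ - a₁*b₄ ≠ 0 := fun h => d14 (by linear_combination -h)
      have e42 : a₄*b₂ - a₂*b₄ ≠ 0 := fun h => d24 (by linear_combination -h)
      have heq' : v^2 = (C a₃*s + C b₃*t) * (C a₄*s + C b₄*t)
          * ((C a₁*s + C b₁*t) * (C a₂*s + C b₂*t)) := by linear_combination heq
      exact descend d34 e31 e32 e41 e42 d12 hco heq' h3 h4
  obtain ⟨S, T, V, c₁, e₁, c₂, e₂, c₃, e₃, c₄, e₄,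
    k12, k13, k14, k23, k24, k34, hco', heq', hdeg'⟩ := key
  have hlt : max S.natDegree T.natDegree < n := by omega
  have := IH (max S.natDegree T.natDegree) hlt S T V c₁ e₁ c₂ e₂ c₃ e₃ c₄ e₄
    k12 k13 k14 k23 k24 k34 hco' le_rfl heq'
  omega

end Descent

theorem elliptic_curve_no_rational_param :
    ¬ ∃ φz φu : RatFunc ℚ, (¬ ∃ c : ℚ, φz = RatFunc.C c) ∧ (¬ ∃ c : ℚ, φu = RatFunc.C c) ∧
      φu^2 = (1 + 4*φz) * φz * (φz - 4) := by
  rintro ⟨φz, φu, hz, -, heq⟩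
  set p := φz.num with hp
  set q := φz.denom with hq
  set r := φu.num with hr
  set w := φu.denom with hw
  have hq0 : q ≠ 0 := φz.denom_ne_zero
  have hw0 : w ≠ 0 := φu.denom_ne_zero
  have hcopq : IsCoprime p q := φz.isCoprime_num_denom
  have hcorw : IsCoprime r w := φu.isCoprime_num_denom
  -- polynomial identity over ℚ
  have hnum : r^2 * q^3 = w^2 * ((q + 4*p) * (p * (p - 4*q))) := by
    have hzq : φz = algebraMap ℚ[X] (RatFunc ℚ) p / algebraMap ℚ[X] (RatFunc ℚ) q :=
      (RatFunc.num_div_denom φz).symm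
    have huq : φu = algebraMap ℚ[X] (RatFunc ℚ) r / algebraMap ℚ[X] (RatFunc ℚ) w :=
      (RatFunc.num_div_denom φu).symm
    have hq' : algebraMap ℚ[X] (RatFunc ℚ) q ≠ 0 := RatFunc.algebraMap_ne_zero hq0
    have hw' : algebraMap ℚ[X] (RatFunc ℚ) w ≠ 0 := RatFunc.algebraMap_ne_zero hw0
    rw [hzq, huq] at heq
    apply RatFunc.algebraMap_injective ℚ
    field_simp at heq
    simp only [map_mul, map_pow, map_add, map_sub, map_ofNat]
    linear_combination heq
  -- move to the algebraic closure
  set F : ℚ[X] →+* (AlgebraicClosure ℚ)[X] :=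
    Polynomial.mapRingHom (algebraMap ℚ (AlgebraicClosure ℚ)) with hF
  have hFinj : Function.Injective F :=
    Polynomial.map_injective _ (algebraMap ℚ (AlgebraicClosure ℚ)).injective
  set P := F p with hP
  set Q := F q with hQ
  set R := F r with hR
  set W := F w with hW
  have hnum' : R^2 * Q^3 = W^2 * ((Q + 4*P) * (P * (P - 4*Q))) := by
    have hmap := congrArg F hnum
    simpa only [map_mul, map_pow, map_add, map_sub, map_ofNat] using hmap
  have hQ0 : Q ≠ 0 := fun h => hq0 (hFinj (h.trans (map_zero F).symm))
  have hW0 : W ≠ 0 := fun h => hw0 (hFinj (h.trans (map_zero F).symm))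
  have hcoPQ : IsCoprime P Q := hcopq.map F
  -- extract the quartic square
  have hdvd2 : W^2 ∣ (R * Q^2)^2 :=
    ⟨((Q + 4*P) * (P * (P - 4*Q))) * Q, by linear_combination Q * hnum'⟩
  have hdvd : W ∣ R * Q^2 := (IsIntegrallyClosed.pow_dvd_pow_iff two_ne_zero).mp hdvd2
  obtain ⟨V, hV⟩ := hdvd
  have hVsq : V^2 = (C (4:AlgebraicClosure ℚ) * P + C 1 * Q) * (C 1 * P + C 0 * Q)
      * ((C 1 * P + C (-4) * Q) * (C 0 * P + C 1 * Q)) := by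
    have hW2 : W^2 ≠ 0 := pow_ne_zero _ hW0
    apply mul_left_cancel₀ hW2
    simp only [map_ofNat, map_neg, C_1, C_0]
    linear_combination (-(R*Q^2) - W*V) * hV + Q * hnum'
  -- apply the descent theorem
  have hres := no_four_square (max P.natDegree Q.natDegree) P Q V
    (4:AlgebraicClosure ℚ) 1 1 0 1 (-4) 0 1
    (by norm_num) (by norm_num) (by norm_num) (by norm_num) (by norm_num) (by norm_num)
    hcoPQ le_rfl hVsq
  -- conclude φz is constant
  have hpdeg : p.natDegree = 0 := by
    have h1 := hres.1
    rwa [hP, hF, coe_mapRingHom,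
      natDegree_map_eq_of_injective (algebraMap ℚ (AlgebraicClosure ℚ)).injective] at h1
  have hqdeg : q.natDegree = 0 := by
    have h1 := hres.2
    rwa [hQ, hF, coe_mapRingHom,
      natDegree_map_eq_of_injective (algebraMap ℚ (AlgebraicClosure ℚ)).injective] at h1
  apply hz
  refine ⟨p.coeff 0 / q.coeff 0, ?_⟩
  have hpc : p = C (p.coeff 0) := eq_C_of_natDegree_eq_zero hpdeg
  have hqc : q = C (q.coeff 0) := eq_C_of_natDegree_eq_zero hqdeg
  rw [← RatFunc.num_div_denom φz, ← hp, ← hq]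
  conv_lhs => rw [hpc, hqc]
  rw [RatFunc.algebraMap_C, RatFunc.algebraMap_C, ← map_div₀ (RatFunc.C (K := ℚ))]
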